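/- arXiv:2310.13958 — 3 statements merged into one kernel-verified Lean document; each statement's English description precedes it below -/
import Mathlib

section
/- For n ≥ 1 and field elements s, a₁, ..., aₙ, let N be the n×n matrix with Nᵢᵢ = s - aᵢ and Nᵢⱼ = aᵢ for j ≠ i. Then det N = ∏ᵢ(s - 2aᵢ) + Σⱼ aⱼ · ∏_{i ≠ j}(s - 2aᵢ). -/
open Matrix Finset

lemma key_unit {K : Type*} [Field K] {n : ℕ} (d u : Fin n → K) (hd : ∀ i, d i ≠ 0) :
    (Matrix.diagonal d + Matrix.replicateCol (Fin 1) u * Matrix.replicateRow (Fin 1) (1 : Fin n → K)).det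
      = ∏ i, d i + ∑ j, u j * ∏ i ∈ Finset.univ.erase j, d i := by
  have hA : IsUnit (Matrix.diagonal d).det := by
    rw [Matrix.det_diagonal]
    exact isUnit_iff_ne_zero.2 (Finset.prod_ne_zero_iff.2 fun i _ => hd i)
  rw [Matrix.det_add_mul (Matrix.replicateCol (Fin 1) u) (Matrix.replicateRow (Fin 1) (1 : Fin n → K)) hA, Matrix.det_diagonal,
    Matrix.det_fin_one]
  have hinv : (Matrix.diagonal d)⁻¹ = Matrix.diagonal (fun i => (d i)⁻¹) := by
    refine Matrix.inv_eq_right_inv ?_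
    rw [Matrix.diagonal_mul_diagonal]
    convert Matrix.diagonal_one with i
    exact mul_inv_cancel₀ (hd i)
  have h1 : (1 + Matrix.replicateRow (Fin 1) (1 : Fin n → K) * (Matrix.diagonal d)⁻¹ *
      Matrix.replicateCol (Fin 1) u : Matrix (Fin 1) (Fin 1) K) 0 0 = 1 + ∑ j, (d j)⁻¹ * u j := by
    simp [Matrix.mul_apply, hinv, Matrix.diagonal_apply, Matrix.replicateRow_apply, Matrix.replicateCol_apply]
  rw [h1, mul_add, mul_one, Finset.mul_sum]
  congr 1
  refine Finset.sum_congr rfl fun j _ => ?_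
  rw [← Finset.mul_prod_erase _ _ (Finset.mem_univ j)]
  field_simp [hd j]

open Polynomial in
lemma key {K : Type*} [Field K] {n : ℕ} (d u : Fin n → K) :
    (Matrix.diagonal d + Matrix.replicateCol (Fin 1) u * Matrix.replicateRow (Fin 1) (1 : Fin n → K)).det
      = ∏ i, d i + ∑ j, u j * ∏ i ∈ Finset.univ.erase j, d i := by
  set F := FractionRing (Polynomial K)
  let φ : Polynomial K →+* F := algebraMap (Polynomial K) F
  have hφ : Function.Injective φ := IsFractionRing.injective (Polynomial K) F
  set d' : Fin n → Polynomial K := fun i => X + C (d i) with hd'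
  set u' : Fin n → Polynomial K := fun i => C (u i) with hu'
  -- identity over K[X]
  have hKX : (Matrix.diagonal d' + Matrix.replicateCol (Fin 1) u' * Matrix.replicateRow (Fin 1) (1 : Fin n → Polynomial K)).det
      = ∏ i, d' i + ∑ j, u' j * ∏ i ∈ Finset.univ.erase j, d' i := by
    apply hφ
    have hmap : (Matrix.diagonal d' + Matrix.replicateCol (Fin 1) u' * Matrix.replicateRow (Fin 1) (1 : Fin n → Polynomial K)).map φ
        = Matrix.diagonal (fun i => φ (d' i)) + Matrix.replicateCol (Fin 1) (fun i => φ (u' i))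
          * Matrix.replicateRow (Fin 1) (1 : Fin n → F) := by
      ext i j
      simp [Matrix.mul_apply, Matrix.diagonal_apply, apply_ite φ]
    have hdet := key_unit (K := F) (fun i => φ (d' i)) (fun i => φ (u' i))
      (fun i => by
        simp only [hd', map_ne_zero_iff φ hφ]
        exact X_add_C_ne_zero (d i))
    rw [RingHom.map_det φ, RingHom.mapMatrix_apply, hmap, hdet]
    simp only [map_add, map_sum, _root_.map_mul, map_prod]
  -- now evaluate at 0
  have := congrArg (Polynomial.evalRingHom (0 : K)) hKX
  rw [RingHom.map_det (Polynomial.evalRingHom (0 : K)), RingHom.mapMatrix_apply] at this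
  have hmap0 : (Matrix.diagonal d' + Matrix.replicateCol (Fin 1) u' * Matrix.replicateRow (Fin 1) (1 : Fin n → Polynomial K)).map
      (Polynomial.evalRingHom (0 : K))
      = Matrix.diagonal d + Matrix.replicateCol (Fin 1) u * Matrix.replicateRow (Fin 1) (1 : Fin n → K) := by
    ext i j
    simp [Matrix.mul_apply, Matrix.diagonal_apply, apply_ite (Polynomial.eval (0 : K)),
      hd', hu']
  rw [hmap0] at this
  rw [this]
  simp only [map_add, map_sum, _root_.map_mul, map_prod]
  simp [hd', hu']

theorem corbin_determinant_denominator {K : Type*} [Field K] (n : ℕ) (hn : 1 ≤ n)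
    (s : K) (a : Fin n → K)
    (N : Matrix (Fin n) (Fin n) K)
    (hN : ∀ i j, N i j = if i = j then s - a i else a i) :
    N.det = ∏ i, (s - 2 * a i) +
      ∑ j, a j * ∏ i ∈ Finset.univ.erase j, (s - 2 * a i) := by
  have hNe : N = Matrix.diagonal (fun i => s - 2 * a i)
      + Matrix.replicateCol (Fin 1) a * Matrix.replicateRow (Fin 1) (1 : Fin n → K) := by
    ext i j
    rw [hN]
    by_cases h : i = j
    · subst h; simp [Matrix.mul_apply, Matrix.diagonal_apply]; ring
    · simp [Matrix.mul_apply, Matrix.diagonal_apply, h]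
  rw [hNe, key]
end

section
/- For n ≥ 1 and field elements s, a₁, ..., aₙ, let M be the n×n matrix with Mᵢᵢ = (s - aᵢ)² and Mᵢⱼ = aᵢ² for j ≠ i. Then det M = sⁿ · ∏ᵢ(s - 2aᵢ) + s^{n-1} · Σⱼ aⱼ² · ∏_{i ≠ j}(s - 2aᵢ). -/
open Matrix Finset in
lemma det_diag_add_const_rows {R : Type*} [CommRing R] {n : ℕ} (d u : Fin n → R) :
    (Matrix.of fun i j => (if i = j then d i else 0) + u i).det
      = ∏ i, d i + ∑ j, u j * ∏ i ∈ Finset.univ.erase j, d i := by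
  classical
  set f := (Matrix.detRowAlternating : (Fin n → R) [⋀^Fin n]→ₗ[R] R) with hf
  set m : Fin n → Fin n → R := fun i => u i • (fun _ => (1:R)) with hm
  set m' : Fin n → Fin n → R := fun i => d i • (Pi.single i (1:R) : Fin n → R) with hm'
  have hM : (Matrix.of fun i j => (if i = j then d i else 0) + u i) = m + m' := by
    ext i j
    simp only [Matrix.of_apply, Pi.add_apply, hm, hm', Pi.smul_apply, smul_eq_mul,
      Pi.single_apply, mul_ite, mul_one, mul_zero]
    rcases eq_or_ne i j with h | h
    · subst h; simp [add_comm]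
    · simp [h, Ne.symm h]
  have hdet : (Matrix.of fun i j => (if i = j then d i else 0) + u i).det
      = f.toMultilinearMap (m + m') := by rw [hM]; rfl
  rw [hdet, f.toMultilinearMap.map_add_univ]
  -- evaluate each term
  have key : ∀ s : Finset (Fin n), f.toMultilinearMap (s.piecewise m m')
      = (∏ i, if i ∈ s then u i else d i) *
        f.toMultilinearMap (fun i => if i ∈ s then (fun _ => (1:R)) else Pi.single i 1) := by
    intro s
    have : s.piecewise m m' = fun i =>
        (if i ∈ s then u i else d i) • (if i ∈ s then (fun _ => (1:R)) else Pi.single i 1) := by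
      funext i
      by_cases h : i ∈ s <;> simp [Finset.piecewise, h, hm, hm']
    rw [this, f.toMultilinearMap.map_smul_univ, smul_eq_mul]
  have hzero : ∀ s : Finset (Fin n), 1 < s.card →
      f.toMultilinearMap (s.piecewise m m') = 0 := by
    intro s hs
    obtain ⟨i, hi, j, hj, hij⟩ := Finset.one_lt_card.mp hs
    rw [key]
    have : f (fun i => if i ∈ s then (fun _ => (1:R)) else Pi.single i 1) = 0 := by
      apply f.map_eq_zero_of_eq _ _ hij
      simp [hi, hj]
    rw [show f.toMultilinearMap (fun i => if i ∈ s then (fun _ => (1:R)) else Pi.single i 1)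
      = f (fun i => if i ∈ s then (fun _ => (1:R)) else Pi.single i 1) from rfl, this, mul_zero]
  -- sum reduces to empty set plus singletons
  have hempty : f.toMultilinearMap ((∅ : Finset (Fin n)).piecewise m m') = ∏ i, d i := by
    rw [key]
    have h1 : (fun i : Fin n => if i ∈ (∅ : Finset (Fin n)) then (fun _ => (1:R))
        else Pi.single i 1) = (1 : Matrix (Fin n) (Fin n) R) := by
      funext i j
      simp [Matrix.one_apply, Pi.single_apply, eq_comm]
    rw [h1]
    have : f.toMultilinearMap (1 : Matrix (Fin n) (Fin n) R) = Matrix.det 1 := rfl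
    rw [this, Matrix.det_one, mul_one]
    simp
  have hsingle : ∀ j : Fin n, f.toMultilinearMap (({j} : Finset (Fin n)).piecewise m m')
      = u j * ∏ i ∈ Finset.univ.erase j, d i := by
    intro j
    rw [key]
    have h1 : (fun i : Fin n => if i ∈ ({j} : Finset (Fin n)) then (fun _ => (1:R))
        else Pi.single i 1) = Matrix.updateRow (1 : Matrix (Fin n) (Fin n) R) j (fun _ => 1) := by
      funext i k
      rcases eq_or_ne i j with h | h
      · subst h; simp
      · simp [Matrix.updateRow_ne h, h, Matrix.one_apply, Pi.single_apply, eq_comm]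
    have h2 : f.toMultilinearMap (fun i : Fin n => if i ∈ ({j} : Finset (Fin n))
        then (fun _ => (1:R)) else Pi.single i 1)
        = (Matrix.updateRow (1 : Matrix (Fin n) (Fin n) R) j (fun _ => 1)).det := by
      rw [h1]; rfl
    rw [h2, ← Matrix.cramer_transpose_apply, Matrix.transpose_one, Matrix.cramer_one]
    have h3 : (∏ i, if i ∈ ({j} : Finset (Fin n)) then u i else d i)
        = u j * ∏ i ∈ Finset.univ.erase j, d i := by
      rw [← Finset.mul_prod_erase Finset.univ _ (Finset.mem_univ j)]
      simp only [Finset.mem_singleton, if_pos rfl]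
      congr 1
      apply Finset.prod_congr rfl
      intro i hi
      rw [if_neg (Finset.ne_of_mem_erase hi)]
    rw [h3]
    simp
  -- now split the sum
  have hsub : ({∅} : Finset (Finset (Fin n))) ∪ Finset.univ.image ({·}) ⊆ Finset.univ :=
    Finset.subset_univ _
  rw [← Finset.sum_subset hsub]
  · rw [Finset.sum_union]
    · rw [Finset.sum_singleton, hempty, Finset.sum_image Finset.singleton_injective.injOn]
      congr 1
      exact Finset.sum_congr rfl fun j _ => hsingle j
    · rw [Finset.disjoint_left]
      intro t ht ht'
      simp only [Finset.mem_singleton] at ht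
      obtain ⟨j, -, hj⟩ := Finset.mem_image.mp ht'
      subst ht
      exact Finset.singleton_ne_empty j hj
  · intro t _ ht
    apply hzero
    rcases Nat.lt_or_ge 1 t.card with h | h
    · exact h
    · exfalso
      interval_cases h' : t.card
      · exact ht (by simp [Finset.card_eq_zero.mp h'])
      · obtain ⟨j, rfl⟩ := Finset.card_eq_one.mp h'
        exact ht (by simp)

theorem corbin_determinant_numerator {K : Type*} [Field K] (n : ℕ) (hn : 1 ≤ n)
    (s : K) (a : Fin n → K)
    (M : Matrix (Fin n) (Fin n) K)
    (hM : ∀ i j, M i j = if i = j then (s - a i) ^ 2 else (a i) ^ 2) :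
    M.det = s ^ n * ∏ i, (s - 2 * a i) +
      s ^ (n - 1) * ∑ j, (a j) ^ 2 * ∏ i ∈ Finset.univ.erase j, (s - 2 * a i) := by
  have hMeq : M = Matrix.of fun i j =>
      (if i = j then s * (s - 2 * a i) else 0) + (a i) ^ 2 := by
    ext i j
    rw [hM]
    rcases eq_or_ne i j with h | h
    · subst h; simp; ring
    · simp [h]
  rw [hMeq, det_diag_add_const_rows]
  have h1 : ∏ i : Fin n, s * (s - 2 * a i) = s ^ n * ∏ i, (s - 2 * a i) := by
    rw [Finset.prod_mul_distrib, Finset.prod_const, Finset.card_univ, Fintype.card_fin]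
  have h2 : ∀ j : Fin n, ∏ i ∈ Finset.univ.erase j, s * (s - 2 * a i)
      = s ^ (n - 1) * ∏ i ∈ Finset.univ.erase j, (s - 2 * a i) := by
    intro j
    rw [Finset.prod_mul_distrib, Finset.prod_const, Finset.card_erase_of_mem (Finset.mem_univ j),
      Finset.card_univ, Fintype.card_fin]
  rw [h1]
  congr 1
  rw [Finset.mul_sum]
  exact Finset.sum_congr rfl fun j _ => by rw [h2 j]; ring
end

section
/- For elements a, b, c, c', d, d' of a commutative ring, the determinant of the 4×4 matrix with rows (1, a, a, a²), (1, b, b, b²), (1, c, c', cc'), (1, d, d', dd') equals (a - b) times the determinant of the 3×3 matrix with rows (1, ab, a + b), (1, cd', c + d'), (1, c'd, c' + d). -/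
theorem corbin_muir_determinant {R : Type*} [CommRing R] (a b c c' d d' : R) :
    (Matrix.det !![1, a, a, a ^ 2; 1, b, b, b ^ 2; 1, c, c', c * c'; 1, d, d', d * d']) =
      (a - b) * Matrix.det !![1, a * b, a + b; 1, c * d', c + d'; 1, c' * d, c' + d] := by
  simp [Matrix.det_succ_row_zero, Fin.sum_univ_succ,
    show Fin.succAbove (1 : Fin 4) (2 : Fin 3) = 3 by decide,
    show Fin.succAbove (2 : Fin 4) (2 : Fin 3) = 3 by decide,
    show Fin.succAbove (3 : Fin 4) (2 : Fin 3) = 2 by decide,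
    show Fin.castSucc (2 : Fin 3) = (2 : Fin 4) by decide]
  ring
end
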